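/- Define for λ ∈ (0,1) and n ∈ ℕ the function p_n(λ) = (1 + (√5 − 3)λ)^n − (1 + (√5/2)(√5 − 3)λ)^n. Then the limit as λ → 0+ of sup over n ≥ 1 of p_n(λ) equals 4^(2+√5) · 5^(−5/2−√5) · (√5 − 2). -/

import Mathlib

open Real Filter Set Topology

noncomputable section

namespace Stmt4Aux

def aF (l : ℝ) : ℝ := -Real.log (1 - (3 - Real.sqrt 5) * l)
def bF (l : ℝ) : ℝ := -Real.log (1 - Real.sqrt 5 * (3 - Real.sqrt 5) / 2 * l)
def dF (l : ℝ) : ℝ := bF l - aF l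
def qF (l : ℝ) : ℝ := aF l / dF l
def nF (l : ℝ) : ℕ := ⌈Real.log (Real.sqrt 5 / 2) / dF l⌉₊
def uF (l : ℝ) : ℝ := Real.exp (-(dF l) * nF l)

lemma hs2 : Real.sqrt 5 ^ 2 = 5 := Real.sq_sqrt (by norm_num)
lemma hs0 : (0:ℝ) < Real.sqrt 5 := Real.sqrt_pos.mpr (by norm_num)
lemma hslb : (2:ℝ) < Real.sqrt 5 := by nlinarith [hs2, hs0]
lemma hsub : Real.sqrt 5 < 7/3 := by nlinarith [hs2, hs0]

lemma amgm {q u : ℝ} (hq : 0 < q) (hu0 : 0 ≤ u) (hu1 : u ≤ 1) :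
    u ^ q * (1 - u) ≤ q ^ q / (q + 1) ^ (q + 1) := by
  have hq1 : (0:ℝ) < q + 1 := by linarith
  have hu1' : (0:ℝ) ≤ 1 - u := by linarith
  have h := Real.geom_mean_le_arith_mean2_weighted
    (by positivity : (0:ℝ) ≤ q / (q+1)) (by positivity : (0:ℝ) ≤ 1 / (q+1))
    (by positivity : (0:ℝ) ≤ u * (q+1) / q) (by positivity : (0:ℝ) ≤ (1-u) * (q+1))
    (by field_simp)
  have hsum : q/(q+1) * (u*(q+1)/q) + 1/(q+1) * ((1-u)*(q+1)) = 1 := by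
    field_simp; ring
  rw [hsum] at h
  have h2 : ((u*(q+1)/q) ^ (q/(q+1)) * ((1-u)*(q+1)) ^ (1/(q+1))) ^ (q+1) ≤ 1 := by
    have := Real.rpow_le_rpow (by positivity) h hq1.le
    rwa [Real.one_rpow] at this
  rw [Real.mul_rpow (Real.rpow_nonneg (by positivity) _) (Real.rpow_nonneg (by positivity) _),
      ← Real.rpow_mul (by positivity), ← Real.rpow_mul (by positivity),
      div_mul_cancel₀ _ hq1.ne', one_div_mul_cancel hq1.ne', Real.rpow_one] at h2
  have h3 : u ^ q * ((q+1)/q) ^ q * ((1-u)*(q+1)) ≤ 1 := by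
    rwa [show u*(q+1)/q = u * ((q+1)/q) by ring, Real.mul_rpow hu0 (by positivity)] at h2
  have h4 : ((q+1)/q) ^ q * (q+1) = (q+1)^(q+1) / q^q := by
    rw [Real.div_rpow hq1.le hq.le, Real.rpow_add_one hq1.ne']
    field_simp
  have hqq : (0:ℝ) < q ^ q := Real.rpow_pos_of_pos hq _
  have hq1q : (0:ℝ) < (q+1) ^ (q+1) := Real.rpow_pos_of_pos hq1 _
  have h5 : u ^ q * (1 - u) * ((q+1)^(q+1) / q^q) ≤ 1 := by
    calc u ^ q * (1 - u) * ((q+1)^(q+1) / q^q)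
        = u ^ q * (((q+1)/q) ^ q * (q+1)) * (1-u) := by rw [h4]; ring
      _ = u ^ q * ((q+1)/q) ^ q * ((1-u)*(q+1)) := by ring
      _ ≤ 1 := h3
  rw [le_div_iff₀ hq1q]
  have h6 := mul_le_mul_of_nonneg_right h5 hqq.le
  rw [one_mul] at h6
  calc u^q*(1-u)*(q+1)^(q+1) = u ^ q * (1 - u) * ((q+1)^(q+1) / q^q) * q^q := by
        field_simp
    _ ≤ q^q := h6

lemma tendsto_log_slope (c : ℝ) :
    Tendsto (fun l : ℝ => -Real.log (1 - c * l) / l) (𝓝[>] (0:ℝ)) (𝓝 c) := by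
  have h0 : HasDerivAt (fun l : ℝ => 1 - c * l) (-c) 0 := by
    simpa using ((hasDerivAt_id (0:ℝ)).const_mul c).const_sub 1
  have hlog : HasDerivAt Real.log ((1:ℝ) - c*0)⁻¹ ((1:ℝ) - c*0) :=
    Real.hasDerivAt_log (by norm_num)
  have hcomp := (hlog.comp 0 h0).neg
  have h1 : HasDerivAt (fun l : ℝ => -Real.log (1 - c * l)) c 0 := by
    simpa [Function.comp_def, Pi.neg_def] using hcomp
  have h2 := hasDerivAt_iff_tendsto_slope.mp h1
  have h3 : Tendsto (slope (fun l : ℝ => -Real.log (1 - c*l)) 0) (𝓝[>] 0) (𝓝 c) :=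
    h2.mono_left (nhdsWithin_mono 0 (fun x hx => by simpa using ne_of_gt hx))
  refine h3.congr (fun x => ?_)
  rw [slope_def_field]
  simp [Real.log_one]

lemma basic {l : ℝ} (hl : l ∈ Set.Ioo (0:ℝ) (1/2)) :
    0 < 1 - (3 - Real.sqrt 5) * l ∧ 0 < 1 - Real.sqrt 5 * (3 - Real.sqrt 5) / 2 * l ∧
      0 < aF l ∧ aF l < bF l := by
  obtain ⟨hl0, hl2⟩ := hl
  have h2 := hs2; have h0 := hs0; have hlb := hslb; have hub := hsub
  have hA0 : 0 < 1 - (3 - Real.sqrt 5) * l := by nlinarith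
  have hA1 : 1 - (3 - Real.sqrt 5) * l < 1 := by nlinarith
  have hB0 : 0 < 1 - Real.sqrt 5 * (3 - Real.sqrt 5) / 2 * l := by nlinarith
  have hBA : 1 - Real.sqrt 5 * (3 - Real.sqrt 5) / 2 * l < 1 - (3 - Real.sqrt 5) * l := by
    nlinarith
  refine ⟨hA0, hB0, ?_, ?_⟩
  · simp only [aF, neg_pos]
    exact Real.log_neg hA0 hA1
  · have := Real.log_lt_log hB0 hBA
    simp only [aF, bF]
    linarith

lemma key {l : ℝ} (hl : l ∈ Set.Ioo (0:ℝ) (1/2)) (n : ℕ) :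
    (1 + (Real.sqrt 5 - 3) * l) ^ n - (1 + Real.sqrt 5 / 2 * (Real.sqrt 5 - 3) * l) ^ n
      = Real.exp (-(dF l) * n) ^ qF l * (1 - Real.exp (-(dF l) * n)) := by
  obtain ⟨hA0, hB0, ha0, hab⟩ := basic hl
  have hd : 0 < dF l := sub_pos.mpr hab
  have hAexp : 1 + (Real.sqrt 5 - 3) * l = Real.exp (-(aF l)) := by
    simp only [aF, neg_neg]
    rw [Real.exp_log hA0]; ring
  have hBexp : 1 + Real.sqrt 5 / 2 * (Real.sqrt 5 - 3) * l = Real.exp (-(bF l)) := by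
    simp only [bF, neg_neg]
    rw [Real.exp_log hB0]; ring
  rw [hAexp, hBexp, ← Real.exp_nat_mul, ← Real.exp_nat_mul,
      Real.rpow_def_of_pos (Real.exp_pos _), Real.log_exp]
  have hX : -(dF l) * (n:ℝ) * qF l = (n:ℝ) * -(aF l) := by
    simp only [qF]
    field_simp
  rw [hX, mul_sub, mul_one, ← Real.exp_add]
  congr 2
  simp only [dF]; ring

lemma hn1 {l : ℝ} (hl : l ∈ Set.Ioo (0:ℝ) (1/2)) : 1 ≤ nF l := by
  obtain ⟨_, _, _, hab⟩ := basic hl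
  have hd : 0 < dF l := sub_pos.mpr hab
  have hlog : 0 < Real.log (Real.sqrt 5 / 2) := Real.log_pos (by
    rw [lt_div_iff₀ (by norm_num : (0:ℝ) < 2)]; simpa using hslb)
  exact Nat.one_le_iff_ne_zero.mpr (Nat.pos_iff_ne_zero.mp
    (Nat.ceil_pos.mpr (div_pos hlog hd)))

lemma bounds {l : ℝ} (hl : l ∈ Set.Ioo (0:ℝ) (1/2)) :
    uF l ^ qF l * (1 - uF l) ≤ sSup {x : ℝ | ∃ n : ℕ, 1 ≤ n ∧
        x = (1 + (Real.sqrt 5 - 3) * l) ^ n -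
            (1 + Real.sqrt 5 / 2 * (Real.sqrt 5 - 3) * l) ^ n} ∧
    sSup {x : ℝ | ∃ n : ℕ, 1 ≤ n ∧
        x = (1 + (Real.sqrt 5 - 3) * l) ^ n -
            (1 + Real.sqrt 5 / 2 * (Real.sqrt 5 - 3) * l) ^ n}
      ≤ qF l ^ qF l / (qF l + 1) ^ (qF l + 1) := by
  obtain ⟨hA0, hB0, ha0, hab⟩ := basic hl
  obtain ⟨hl0, hl2⟩ := hl
  have hd : 0 < dF l := sub_pos.mpr hab
  have hq0 : 0 < qF l := div_pos ha0 hd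
  have hA1 : 1 + (Real.sqrt 5 - 3) * l ≤ 1 := by nlinarith [hsub, hs0]
  have hBdd : BddAbove {x : ℝ | ∃ n : ℕ, 1 ≤ n ∧
      x = (1 + (Real.sqrt 5 - 3) * l) ^ n -
          (1 + Real.sqrt 5 / 2 * (Real.sqrt 5 - 3) * l) ^ n} := by
    refine ⟨1, fun x hx => ?_⟩
    obtain ⟨n, hn, rfl⟩ := hx
    have h1 : (1 + (Real.sqrt 5 - 3) * l) ^ n ≤ 1 :=
      pow_le_one₀ (by linarith [hA0] : (0:ℝ) ≤ 1 + (Real.sqrt 5 - 3) * l) hA1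
    have h2 : (0:ℝ) ≤ (1 + Real.sqrt 5 / 2 * (Real.sqrt 5 - 3) * l) ^ n :=
      pow_nonneg (by linarith [hB0] : (0:ℝ) ≤ 1 + Real.sqrt 5 / 2 * (Real.sqrt 5 - 3) * l) n
    linarith
  constructor
  · refine le_csSup hBdd ?_
    exact ⟨nF l, hn1 ⟨hl0, hl2⟩, by simp only [uF]; exact (key ⟨hl0, hl2⟩ (nF l)).symm⟩
  · refine csSup_le ⟨_, ⟨1, le_refl 1, rfl⟩⟩ (fun x hx => ?_)
    obtain ⟨n, hn, rfl⟩ := hx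
    rw [key ⟨hl0, hl2⟩ n]
    refine amgm hq0 (Real.exp_pos _).le ?_
    have : -(dF l) * (n:ℝ) ≤ 0 := by
      have := mul_nonneg hd.le (Nat.cast_nonneg n)
      linarith
    calc Real.exp (-(dF l) * n) ≤ Real.exp 0 := Real.exp_le_exp.mpr this
      _ = 1 := Real.exp_zero

lemma hIoo : Set.Ioo (0:ℝ) (1/2) ∈ 𝓝[>] (0:ℝ) :=
  Ioo_mem_nhdsGT_of_mem ⟨le_refl _, by norm_num⟩

lemma tendsto_id0 : Tendsto (fun l : ℝ => l) (𝓝[>] (0:ℝ)) (𝓝 0) :=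
  tendsto_id.mono_right nhdsWithin_le_nhds

lemma tendsto_dF_div : Tendsto (fun l => dF l / l) (𝓝[>] (0:ℝ))
    (𝓝 ((3 - Real.sqrt 5) * (Real.sqrt 5 - 2) / 2)) := by
  have hA := tendsto_log_slope (3 - Real.sqrt 5)
  have hB := tendsto_log_slope (Real.sqrt 5 * (3 - Real.sqrt 5) / 2)
  have h := hB.sub hA
  have heq : Real.sqrt 5 * (3 - Real.sqrt 5) / 2 - (3 - Real.sqrt 5)
      = (3 - Real.sqrt 5) * (Real.sqrt 5 - 2) / 2 := by ring
  rw [heq] at h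
  refine h.congr (fun x => ?_)
  simp only [dF, aF, bF, sub_div]

lemma tendsto_dF : Tendsto dF (𝓝[>] (0:ℝ)) (𝓝 0) := by
  have h := tendsto_dF_div.mul tendsto_id0
  rw [mul_zero] at h
  refine Tendsto.congr' ?_ h
  filter_upwards [self_mem_nhdsWithin] with x hx
  exact div_mul_cancel₀ _ (ne_of_gt hx)

lemma tendsto_qF : Tendsto qF (𝓝[>] (0:ℝ)) (𝓝 (2 * Real.sqrt 5 + 4)) := by
  have hA := tendsto_log_slope (3 - Real.sqrt 5)
  have hba : (0:ℝ) < (3 - Real.sqrt 5) * (Real.sqrt 5 - 2) / 2 := by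
    have := hslb; have := hsub; nlinarith
  have h := hA.div tendsto_dF_div hba.ne'
  have hval : (3 - Real.sqrt 5) / ((3 - Real.sqrt 5) * (Real.sqrt 5 - 2) / 2)
      = 2 * Real.sqrt 5 + 4 := by
    have h1 : (0:ℝ) < 3 - Real.sqrt 5 := by have := hsub; linarith
    have h2 : (0:ℝ) < Real.sqrt 5 - 2 := by have := hslb; linarith
    rw [div_eq_iff hba.ne']
    linear_combination (Real.sqrt 5 - 3) * hs2
  rw [hval] at h
  refine h.congr' ?_
  filter_upwards [self_mem_nhdsWithin] with x hx
  have hx0 : x ≠ 0 := ne_of_gt hx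
  simp only [Pi.div_apply, qF, aF]
  rcases eq_or_ne (dF x) 0 with hdx | hdx
  · simp [hdx]
  · field_simp

lemma tendsto_dn : Tendsto (fun l => dF l * (nF l : ℝ)) (𝓝[>] (0:ℝ))
    (𝓝 (Real.log (Real.sqrt 5 / 2))) := by
  have hC : Tendsto (fun l : ℝ => Real.log (Real.sqrt 5 / 2) + dF l) (𝓝[>] (0:ℝ))
      (𝓝 (Real.log (Real.sqrt 5 / 2))) := by
    simpa using (tendsto_const_nhds.add tendsto_dF)
  refine tendsto_of_tendsto_of_tendsto_of_le_of_le' tendsto_const_nhds hC ?_ ?_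
  · filter_upwards [hIoo] with l hl
    obtain ⟨_, _, ha0, hab⟩ := basic hl
    have hd : 0 < dF l := sub_pos.mpr hab
    have h1 : Real.log (Real.sqrt 5 / 2) / dF l ≤ (nF l : ℝ) := Nat.le_ceil _
    calc Real.log (Real.sqrt 5 / 2) = dF l * (Real.log (Real.sqrt 5 / 2) / dF l) := by
          field_simp
      _ ≤ dF l * (nF l : ℝ) := by
          exact mul_le_mul_of_nonneg_left h1 hd.le
  · filter_upwards [hIoo] with l hl
    obtain ⟨_, _, ha0, hab⟩ := basic hl
    have hd : 0 < dF l := sub_pos.mpr hab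
    have hlog : 0 ≤ Real.log (Real.sqrt 5 / 2) :=
      (Real.log_pos (by rw [lt_div_iff₀ (by norm_num : (0:ℝ) < 2)]; simpa using hslb)).le
    have h1 : (nF l : ℝ) ≤ Real.log (Real.sqrt 5 / 2) / dF l + 1 :=
      (Nat.ceil_lt_add_one (div_nonneg hlog hd.le)).le
    calc dF l * (nF l : ℝ) ≤ dF l * (Real.log (Real.sqrt 5 / 2) / dF l + 1) :=
          mul_le_mul_of_nonneg_left h1 hd.le
      _ = Real.log (Real.sqrt 5 / 2) + dF l := by field_simp

lemma tendsto_uF : Tendsto uF (𝓝[>] (0:ℝ)) (𝓝 (2 / Real.sqrt 5)) := by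
  have h := (Real.continuous_exp.tendsto _).comp tendsto_dn.neg
  have hval : Real.exp (-Real.log (Real.sqrt 5 / 2)) = 2 / Real.sqrt 5 := by
    rw [Real.exp_neg, Real.exp_log (by positivity), inv_div]
  rw [hval] at h
  refine h.congr (fun l => ?_)
  simp only [Function.comp, uF, neg_mul]

lemma eqlo : (2 / Real.sqrt 5) ^ (2 * Real.sqrt 5 + 4) * (1 - 2 / Real.sqrt 5)
    = (4:ℝ) ^ ((2:ℝ) + Real.sqrt 5) * (5:ℝ) ^ (-(5:ℝ)/2 - Real.sqrt 5) * (Real.sqrt 5 - 2) := by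
  have h0 := hs0
  have hl5 : Real.log 5 = 2 * Real.log (Real.sqrt 5) := by
    conv_lhs => rw [← hs2]
    rw [Real.log_pow]; push_cast; ring
  have hl4 : Real.log 4 = 2 * Real.log 2 := by
    rw [show (4:ℝ) = 2^2 by norm_num, Real.log_pow]; push_cast; ring
  have hl2s : Real.log (2 / Real.sqrt 5) = Real.log 2 - Real.log (Real.sqrt 5) :=
    Real.log_div two_ne_zero h0.ne'
  rw [Real.rpow_def_of_pos (by positivity), Real.rpow_def_of_pos (by norm_num : (0:ℝ) < 4),
      Real.rpow_def_of_pos (by norm_num : (0:ℝ) < 5), hl2s, hl4, hl5, ← Real.exp_add]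
  have h1 : 1 - 2 / Real.sqrt 5 = Real.exp (-Real.log (Real.sqrt 5)) * (Real.sqrt 5 - 2) := by
    rw [Real.exp_neg, Real.exp_log h0]
    field_simp
  rw [h1, ← mul_assoc, ← Real.exp_add]
  congr 2
  ring

lemma eqhi : (2 * Real.sqrt 5 + 4) ^ (2 * Real.sqrt 5 + 4)
      / (2 * Real.sqrt 5 + 4 + 1) ^ (2 * Real.sqrt 5 + 4 + 1)
    = (2 / Real.sqrt 5) ^ (2 * Real.sqrt 5 + 4) * (1 - 2 / Real.sqrt 5) := by
  have h0 := hs0; have hlb := hslb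
  have hsp2 : (0:ℝ) < Real.sqrt 5 + 2 := by linarith
  have hsm2 : (0:ℝ) < Real.sqrt 5 - 2 := by linarith
  have hp0 : (0:ℝ) < 2 * Real.sqrt 5 + 4 := by linarith
  have hp10 : (0:ℝ) < 2 * Real.sqrt 5 + 4 + 1 := by linarith
  have hlp : Real.log (2 * Real.sqrt 5 + 4) = Real.log 2 + Real.log (Real.sqrt 5 + 2) := by
    rw [show 2 * Real.sqrt 5 + 4 = 2 * (Real.sqrt 5 + 2) by ring,
      Real.log_mul two_ne_zero hsp2.ne']
  have hlp1 : Real.log (2 * Real.sqrt 5 + 4 + 1)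
      = Real.log (Real.sqrt 5) + Real.log (Real.sqrt 5 + 2) := by
    rw [show 2 * Real.sqrt 5 + 4 + 1 = Real.sqrt 5 * (Real.sqrt 5 + 2) by
        linear_combination -hs2, Real.log_mul h0.ne' hsp2.ne']
  have hlsm : Real.log (Real.sqrt 5 - 2) = -Real.log (Real.sqrt 5 + 2) := by
    have h : Real.sqrt 5 - 2 = (Real.sqrt 5 + 2)⁻¹ := by
      rw [inv_eq_one_div, eq_div_iff hsp2.ne']
      linear_combination hs2
    rw [h, Real.log_inv]
  have h1 : 1 - 2 / Real.sqrt 5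
      = Real.exp (Real.log (Real.sqrt 5 - 2) - Real.log (Real.sqrt 5)) := by
    rw [Real.exp_sub, Real.exp_log hsm2, Real.exp_log h0]
    field_simp
  rw [Real.rpow_def_of_pos hp0, Real.rpow_def_of_pos hp10,
      Real.rpow_def_of_pos (by positivity : (0:ℝ) < 2 / Real.sqrt 5),
      Real.log_div two_ne_zero h0.ne', hlp, hlp1, ← Real.exp_sub, h1, ← Real.exp_add, hlsm]
  congr 1
  ring


end Stmt4Aux

open Stmt4Aux in
/-- With p_n(λ) = (1 + (√5-3)λ)^n − (1 + (√5/2)(√5-3)λ)^n, the limit as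
λ → 0+ of sup_{n ≥ 1} p_n(λ) equals 4^(2+√5) · 5^(−5/2−√5) · (√5 − 2). -/
theorem stmt4 :
    Filter.Tendsto
      (fun l : ℝ => sSup {x : ℝ | ∃ n : ℕ, 1 ≤ n ∧
        x = (1 + (Real.sqrt 5 - 3) * l) ^ n -
            (1 + (Real.sqrt 5 / 2) * (Real.sqrt 5 - 3) * l) ^ n})
      (nhdsWithin 0 (Set.Ioi 0))
      (nhds ((4 : ℝ) ^ ((2 : ℝ) + Real.sqrt 5) *
        (5 : ℝ) ^ (-(5 : ℝ) / 2 - Real.sqrt 5) * (Real.sqrt 5 - 2))) := by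
  have hlo : Tendsto (fun l => uF l ^ qF l * (1 - uF l)) (𝓝[>] (0:ℝ))
      (𝓝 ((4:ℝ) ^ ((2:ℝ) + Real.sqrt 5) * (5:ℝ) ^ (-(5:ℝ)/2 - Real.sqrt 5)
        * (Real.sqrt 5 - 2))) := by
    rw [← eqlo]
    exact (tendsto_uF.rpow tendsto_qF
        (Or.inl (by positivity : (0:ℝ) < 2 / Real.sqrt 5).ne')).mul
      (tendsto_const_nhds.sub tendsto_uF)
  have hhi : Tendsto (fun l => qF l ^ qF l / (qF l + 1) ^ (qF l + 1)) (𝓝[>] (0:ℝ))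
      (𝓝 ((4:ℝ) ^ ((2:ℝ) + Real.sqrt 5) * (5:ℝ) ^ (-(5:ℝ)/2 - Real.sqrt 5)
        * (Real.sqrt 5 - 2))) := by
    rw [← eqlo, ← eqhi]
    have h0 := hs0
    have hp0 : (0:ℝ) < 2 * Real.sqrt 5 + 4 := by linarith
    have hp10 : (0:ℝ) < 2 * Real.sqrt 5 + 4 + 1 := by linarith
    have h1 := tendsto_qF.rpow tendsto_qF (Or.inl hp0.ne')
    have h2 := (tendsto_qF.add (tendsto_const_nhds (x := (1:ℝ)))).rpow
      (tendsto_qF.add (tendsto_const_nhds (x := (1:ℝ)))) (Or.inl hp10.ne')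
    exact h1.div h2 (Real.rpow_pos_of_pos hp10 _).ne'
  refine tendsto_of_tendsto_of_tendsto_of_le_of_le' hlo hhi ?_ ?_
  · filter_upwards [hIoo] with l hl
    exact (bounds hl).1
  · filter_upwards [hIoo] with l hl
    exact (bounds hl).2
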